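/- arXiv:1809.05338 — 2 statements merged into one kernel-verified Lean document; each statement's English description precedes it below -/
import Mathlib

section
/- Let F_n, n ∈ ℕ, be distribution functions of nonnegative random variables with unit mean. Then ∫₀^∞ (1 - F_n(s))² ds → 0 as n → ∞ if and only if F_n(x) → 1 for every x > 0. -/
open MeasureTheory Set Filter

/-- For unit-mean distribution functions `F_n`, `∫₀^∞ (1 - F_n s)² ds → 0`
if and only if `F_n x → 1` for every `x > 0`. -/
theorem stmt_10 (F : ℕ → ℝ → ℝ) (hmono : ∀ n, Monotone (F n))
    (hrc : ∀ n t, ContinuousWithinAt (F n) (Ici t) t)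
    (h0 : ∀ n t, 0 ≤ F n t) (h1 : ∀ n t, F n t ≤ 1)
    (hlim : ∀ n, Tendsto (F n) atTop (nhds 1))
    (hmean : ∀ n, ∫ t in Ioi (0 : ℝ), (1 - F n t) = 1) :
    Tendsto (fun n => ∫ s in Ioi (0 : ℝ), (1 - F n s) ^ 2) atTop (nhds 0) ↔
      ∀ x : ℝ, 0 < x → Tendsto (fun n => F n x) atTop (nhds 1) := by
  have hG0 : ∀ n s, 0 ≤ 1 - F n s := fun n s => sub_nonneg.2 (h1 n s)
  have hG1 : ∀ n s, 1 - F n s ≤ 1 := fun n s => by linarith [h0 n s]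
  have hGanti : ∀ n, Antitone (fun s => 1 - F n s) := fun n a b hab => by
    simp only [sub_le_sub_iff_left]; exact hmono n hab
  have hGmeas : ∀ n, Measurable (fun s => 1 - F n s) := fun n =>
    measurable_const.sub (hmono n).measurable
  have hint : ∀ n, IntegrableOn (fun s => 1 - F n s) (Ioi 0) := by
    intro n
    by_contra h
    have h2 := integral_undef h
    rw [hmean n] at h2
    norm_num at h2
  have hint2 : ∀ n, IntegrableOn (fun s => (1 - F n s) ^ 2) (Ioi 0) := by
    intro n
    refine Integrable.mono (hint n) ((hGmeas n).pow_const 2).aestronglyMeasurable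
      (ae_of_all _ fun s => ?_)
    rw [Real.norm_eq_abs, Real.norm_eq_abs, abs_of_nonneg (pow_nonneg (hG0 n s) 2),
      abs_of_nonneg (hG0 n s)]
    calc (1 - F n s) ^ 2 = (1 - F n s) * (1 - F n s) := sq (1 - F n s) ▸ rfl
      _ ≤ 1 * (1 - F n s) := mul_le_mul_of_nonneg_right (hG1 n s) (hG0 n s)
      _ = 1 - F n s := one_mul _
  constructor
  · -- integral → 0 implies pointwise convergence
    intro h x hx
    have key : ∀ n, (1 - F n x) ^ 2 * x ≤ ∫ s in Ioi (0 : ℝ), (1 - F n s) ^ 2 := by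
      intro n
      have step1 : (1 - F n x) ^ 2 * x = ∫ s in Ioc (0 : ℝ) x, (1 - F n x) ^ 2 := by
        rw [setIntegral_const, Measure.real, Real.volume_Ioc, ENNReal.toReal_ofReal (by linarith : (0:ℝ) ≤ x - 0), smul_eq_mul]
        ring
      rw [step1]
      calc ∫ s in Ioc (0 : ℝ) x, (1 - F n x) ^ 2
          ≤ ∫ s in Ioc (0 : ℝ) x, (1 - F n s) ^ 2 := by
            refine setIntegral_mono_on (integrableOn_const measure_Ioc_lt_top.ne)
              ((hint2 n).mono_set Ioc_subset_Ioi_self) measurableSet_Ioc fun s hs => ?_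
            exact pow_le_pow_left₀ (hG0 n x) (hGanti n hs.2) 2
        _ ≤ ∫ s in Ioi (0 : ℝ), (1 - F n s) ^ 2 :=
            setIntegral_mono_set (hint2 n)
              (ae_of_all _ fun s => pow_nonneg (hG0 n s) 2)
              (HasSubset.Subset.eventuallyLE Ioc_subset_Ioi_self)
    have hsq : Tendsto (fun n => (1 - F n x) ^ 2) atTop (nhds 0) := by
      have hdiv : Tendsto (fun n => (∫ s in Ioi (0:ℝ), (1 - F n s) ^ 2) / x) atTop (nhds 0) := by
        simpa using h.div_const x
      refine squeeze_zero (fun n => sq_nonneg _) (fun n => ?_) hdiv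
      rw [le_div_iff₀ hx]
      exact key n
    have habs : Tendsto (fun n => 1 - F n x) atTop (nhds 0) := by
      have := (Real.continuous_sqrt.tendsto 0).comp hsq
      simp only [Function.comp_def] at this
      rw [Real.sqrt_zero] at this
      refine this.congr fun n => ?_
      rw [Real.sqrt_sq (hG0 n x)]
    have := tendsto_const_nhds (x := (1:ℝ)) (f := atTop (α := ℕ)) |>.sub habs
    simpa using this
  · -- pointwise convergence implies integral → 0
    intro h
    have hA : Tendsto (fun n => ∫ s in Ioc (0:ℝ) 1, (1 - F n s) ^ 2) atTop (nhds 0) := by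
      have := tendsto_integral_of_dominated_convergence (μ := volume.restrict (Ioc (0:ℝ) 1))
        (F := fun n s => (1 - F n s) ^ 2) (f := fun _ => (0:ℝ)) (bound := fun _ => (1:ℝ))
        (fun n => ((hGmeas n).pow_const 2).aestronglyMeasurable)
        (integrableOn_const measure_Ioc_lt_top.ne)
        (fun n => ae_of_all _ fun s => by
          rw [Real.norm_eq_abs, abs_of_nonneg (pow_nonneg (hG0 n s) 2)]
          calc (1 - F n s) ^ 2 ≤ 1 ^ 2 :=
              pow_le_pow_left₀ (hG0 n s) (hG1 n s) 2
            _ = 1 := one_pow 2)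
        ?_
      · simpa using this
      · refine (ae_restrict_iff' measurableSet_Ioc).2 (ae_of_all _ fun s hs => ?_)
        have h1' : Tendsto (fun n => 1 - F n s) atTop (nhds 0) := by
          have := tendsto_const_nhds (x := (1:ℝ)) (f := atTop (α := ℕ)) |>.sub (h s hs.1)
          simpa using this
        simpa using h1'.pow 2
    have hB : Tendsto (fun n => 1 - F n 1) atTop (nhds 0) := by
      have := tendsto_const_nhds (x := (1:ℝ)) (f := atTop (α := ℕ)) |>.sub (h 1 one_pos)
      simpa using this
    have hsplit : ∀ n, ∫ s in Ioi (0:ℝ), (1 - F n s) ^ 2 =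
        (∫ s in Ioc (0:ℝ) 1, (1 - F n s) ^ 2) + ∫ s in Ioi (1:ℝ), (1 - F n s) ^ 2 := by
      intro n
      rw [← Set.Ioc_union_Ioi_eq_Ioi (zero_le_one' ℝ),
        setIntegral_union (Set.Ioc_disjoint_Ioi le_rfl) measurableSet_Ioi
          ((hint2 n).mono_set Ioc_subset_Ioi_self)
          ((hint2 n).mono_set (Ioi_subset_Ioi zero_le_one))]
    have htail : ∀ n, ∫ s in Ioi (1:ℝ), (1 - F n s) ^ 2 ≤ 1 - F n 1 := by
      intro n
      calc ∫ s in Ioi (1:ℝ), (1 - F n s) ^ 2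
          ≤ ∫ s in Ioi (1:ℝ), (1 - F n 1) * (1 - F n s) := by
            refine setIntegral_mono_on ((hint2 n).mono_set (Ioi_subset_Ioi zero_le_one))
              (((hint n).mono_set (Ioi_subset_Ioi zero_le_one)).const_mul _)
              measurableSet_Ioi fun s hs => ?_
            calc (1 - F n s) ^ 2 = (1 - F n s) * (1 - F n s) := by ring
              _ ≤ (1 - F n 1) * (1 - F n s) :=
                mul_le_mul_of_nonneg_right (hGanti n hs.le) (hG0 n s)
        _ = (1 - F n 1) * ∫ s in Ioi (1:ℝ), (1 - F n s) := integral_const_mul _ _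
        _ ≤ (1 - F n 1) * ∫ s in Ioi (0:ℝ), (1 - F n s) := by
            refine mul_le_mul_of_nonneg_left ?_ (hG0 n 1)
            exact setIntegral_mono_set (hint n) (ae_of_all _ fun s => hG0 n s)
              (HasSubset.Subset.eventuallyLE (Ioi_subset_Ioi zero_le_one))
        _ = 1 - F n 1 := by rw [hmean n, mul_one]
    have hnonneg : ∀ n, 0 ≤ ∫ s in Ioi (0:ℝ), (1 - F n s) ^ 2 := fun n =>
      setIntegral_nonneg measurableSet_Ioi fun s _ => pow_nonneg (hG0 n s) 2
    have hupper : ∀ n, ∫ s in Ioi (0:ℝ), (1 - F n s) ^ 2 ≤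
        (∫ s in Ioc (0:ℝ) 1, (1 - F n s) ^ 2) + (1 - F n 1) := by
      intro n
      rw [hsplit n]
      exact add_le_add_right (htail n) _
    have : Tendsto (fun n => (∫ s in Ioc (0:ℝ) 1, (1 - F n s) ^ 2) + (1 - F n 1))
        atTop (nhds 0) := by simpa using hA.add hB
    exact squeeze_zero hnonneg hupper this
end

section
/- Let F be the distribution function of a nonnegative random variable with unit mean, and for z > 0 define Ψ_F(z) := ∫₀^∞ (1 - F(t)^z) dt. Then Ψ_F(1) = 1, Ψ_F is nondecreasing on (0,∞), and Ψ_F is concave on (0,∞). -/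
open MeasureTheory Set

/-- For a unit-mean distribution function `F`, the map
`Ψ_F(z) = ∫₀^∞ (1 - F(t)^z) dt` satisfies `Ψ_F(1) = 1`, is nondecreasing on
`(0,∞)` and concave on `(0,∞)`. -/
theorem stmt_11 (F : ℝ → ℝ) (hmono : Monotone F)
    (hrc : ∀ t, ContinuousWithinAt F (Ici t) t)
    (h0 : ∀ t, 0 ≤ F t) (h1 : ∀ t, F t ≤ 1)
    (hlim : Filter.Tendsto F Filter.atTop (nhds 1))
    (hmean : ∫ t in Ioi (0 : ℝ), (1 - F t) = 1)
    (Ψ : ℝ → ℝ) (hΨ : ∀ z, Ψ z = ∫ t in Ioi (0 : ℝ), (1 - F t ^ z)) :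
    Ψ 1 = 1 ∧ MonotoneOn Ψ (Ioi 0) ∧ ConcaveOn ℝ (Ioi 0) Ψ := by
  -- Integrability of 1 - F on Ioi 0
  have hbase : IntegrableOn (fun t => 1 - F t) (Ioi (0 : ℝ)) := by
    by_contra h
    rw [integral_undef h] at hmean
    exact one_ne_zero hmean.symm
  have hFmeas : Measurable F := hmono.measurable
  -- pointwise bounds
  have key : ∀ z : ℝ, 0 < z → ∀ t : ℝ, 1 - F t ^ z ≤ max 1 z * (1 - F t) := by
    intro z hz t
    rcases le_total z 1 with hz1 | hz1
    · have h := Real.rpow_le_rpow_of_exponent_ge' (h0 t) (h1 t) hz.le hz1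
      rw [Real.rpow_one] at h
      have hmax : (1 : ℝ) ≤ max 1 z := le_max_left _ _
      nlinarith [sub_nonneg.2 (h1 t), h]
    · have hb : (-1 : ℝ) ≤ F t - 1 := by linarith [h0 t]
      have hB := one_add_mul_self_le_rpow_one_add hb hz1
      have he : (1 : ℝ) + (F t - 1) = F t := by ring
      rw [he] at hB
      have hmax : max 1 z = z := max_eq_right hz1
      rw [hmax]
      nlinarith [hB]
  have hnn : ∀ z : ℝ, 0 < z → ∀ t : ℝ, 0 ≤ 1 - F t ^ z := by
    intro z hz t
    have : F t ^ z ≤ 1 := Real.rpow_le_one (h0 t) (h1 t) hz.le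
    linarith
  -- integrability for each z > 0
  have hint : ∀ z : ℝ, 0 < z → IntegrableOn (fun t => 1 - F t ^ z) (Ioi (0 : ℝ)) := by
    intro z hz
    apply Integrable.mono (hbase.const_mul (max 1 z))
    · exact ((measurable_const.sub (hFmeas.pow_const z)).aestronglyMeasurable)
    · filter_upwards with t
      rw [Real.norm_eq_abs, Real.norm_eq_abs, abs_of_nonneg (hnn z hz t)]
      exact (key z hz t).trans (le_abs_self _)
  -- pointwise monotonicity in z
  have hptmono : ∀ z₁ z₂ : ℝ, 0 < z₁ → z₁ ≤ z₂ → ∀ t : ℝ,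
      1 - F t ^ z₁ ≤ 1 - F t ^ z₂ := by
    intro z₁ z₂ hz₁ hle t
    have : F t ^ z₂ ≤ F t ^ z₁ :=
      Real.rpow_le_rpow_of_exponent_ge' (h0 t) (h1 t) hz₁.le hle
    linarith
  refine ⟨?_, ?_, ?_⟩
  · rw [hΨ 1]
    simp_rw [Real.rpow_one]
    exact hmean
  · intro z₁ hz₁ z₂ hz₂ hle
    rw [hΨ z₁, hΨ z₂]
    exact integral_mono (hint z₁ hz₁) (hint z₂ hz₂) (hptmono z₁ z₂ hz₁ hle)
  · refine ⟨convex_Ioi 0, ?_⟩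
    intro x hx y hy a b ha hb hab
    simp only [smul_eq_mul]
    rw [hΨ x, hΨ y, hΨ (a * x + b * y)]
    have hxpos : (0 : ℝ) < x := hx
    have hypos : (0 : ℝ) < y := hy
    have hcpos : 0 < a * x + b * y := by
      rcases ha.lt_or_eq with ha' | ha'
      · positivity
      · rw [← ha'] at hab; simp at hab
        rw [← ha']
        simp
        nlinarith
    -- pointwise convexity of z ↦ F t ^ z
    have hpt : ∀ t : ℝ, a * (1 - F t ^ x) + b * (1 - F t ^ y)
        ≤ 1 - F t ^ (a * x + b * y) := by
      intro t
      rcases eq_or_lt_of_le (h0 t) with hF0 | hF0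
      · rw [← hF0, Real.zero_rpow hxpos.ne', Real.zero_rpow hypos.ne',
          Real.zero_rpow hcpos.ne']
        nlinarith
      · have heq : F t ^ (a * x + b * y) = (F t ^ x) ^ a * (F t ^ y) ^ b := by
          rw [Real.rpow_add hF0, mul_comm a x, mul_comm b y,
            Real.rpow_mul (h0 t), Real.rpow_mul (h0 t)]
        have hgm := Real.geom_mean_le_arith_mean2_weighted ha hb
          (Real.rpow_nonneg (h0 t) x) (Real.rpow_nonneg (h0 t) y) hab
        rw [heq]
        linarith
    calc a * (∫ t in Ioi (0:ℝ), (1 - F t ^ x)) + b * (∫ t in Ioi (0:ℝ), (1 - F t ^ y))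
        = ∫ t in Ioi (0:ℝ), (a * (1 - F t ^ x) + b * (1 - F t ^ y)) := by
          rw [integral_add ((hint x hx).const_mul a) ((hint y hy).const_mul b),
            integral_const_mul, integral_const_mul]
      _ ≤ ∫ t in Ioi (0:ℝ), (1 - F t ^ (a * x + b * y)) := by
          exact integral_mono (((hint x hx).const_mul a).add ((hint y hy).const_mul b))
            (hint _ hcpos) hpt
end
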